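/- arXiv:1003.6006 — 2 statements merged into one kernel-verified Lean document; each statement's English description precedes it below -/
import Mathlib

section
/- For every L > 0 and ε > 0 there exists A > 0 such that: whenever N ∈ ℕ, a₁,…,a_N ∈ [0,1] with ∑_{k=1}^N a_k ≥ A, and ν_N is the convolution m₁ ∗ ⋯ ∗ m_N of the probability measures m_k = (1/2)δ₀ + (1/2)δ_{-a_k} on ℝ, then ν_N([-L, 0]) ≤ ε. -/
open MeasureTheory

/-- Convolution of two measures on `ℝ`. -/
noncomputable def convM (μ ν : Measure ℝ) : Measure ℝ :=
  Measure.map (fun p : ℝ × ℝ => p.1 + p.2) (μ.prod ν)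

noncomputable def gexp : ℝ → ENNReal := fun x => ENNReal.ofReal (Real.exp x)

lemma gexp_meas : Measurable gexp := Real.measurable_exp.ennreal_ofReal

lemma gexp_add (x y : ℝ) : gexp (x + y) = gexp x * gexp y := by
  simp [gexp, Real.exp_add, ENNReal.ofReal_mul (Real.exp_nonneg x)]

noncomputable def measOf (a : ℝ) : Measure ℝ :=
  ((1 : ENNReal) / 2) • Measure.dirac (0 : ℝ) + ((1 : ENNReal) / 2) • Measure.dirac (-a)

instance measOf_prob (a : ℝ) : IsProbabilityMeasure (measOf a) := by
  constructor
  simp [measOf]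
  exact ENNReal.inv_two_add_inv_two

lemma convM_lint (μ ν : Measure ℝ) [SFinite μ] [SFinite ν] :
    ∫⁻ x, gexp x ∂(convM μ ν) = (∫⁻ x, gexp x ∂μ) * ∫⁻ x, gexp x ∂ν := by
  rw [convM, lintegral_map gexp_meas (by exact measurable_fst.add measurable_snd : Measurable (fun p : ℝ × ℝ => p.1 + p.2))]
  rw [lintegral_prod (fun p : ℝ × ℝ => gexp (p.1 + p.2))
    ((gexp_meas.comp (measurable_fst.add measurable_snd)).aemeasurable)]
  simp only [gexp_add]
  simp_rw [lintegral_const_mul _ gexp_meas, lintegral_mul_const _ gexp_meas]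

instance convM_prob (μ ν : Measure ℝ) [IsProbabilityMeasure μ] [IsProbabilityMeasure ν] :
    IsProbabilityMeasure (convM μ ν) :=
  Measure.isProbabilityMeasure_map (measurable_fst.add measurable_snd).aemeasurable

lemma key_real (a : ℝ) (h0 : 0 ≤ a) (h1 : a ≤ 1) :
    (1 + Real.exp (-a)) / 2 ≤ Real.exp (-(a / 4)) := by
  have hconv := convexOn_exp.2 (Set.mem_univ (0:ℝ)) (Set.mem_univ (-1:ℝ))
    (by linarith : (0:ℝ) ≤ 1 - a) h0 (by ring : (1 - a) + a = 1)
  simp only [smul_eq_mul, mul_zero, mul_neg_one, zero_add, Real.exp_zero, mul_one] at hconv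
  have he1 : Real.exp (-1) ≤ 1/2 := by
    rw [Real.exp_neg, inv_le_comm₀ (Real.exp_pos 1) (by norm_num)]
    norm_num
    calc (2:ℝ) ≤ 2.7182818283 := by norm_num
    _ ≤ Real.exp 1 := Real.exp_one_gt_d9.le
  have hlin : 1 - a/4 ≤ Real.exp (-(a/4)) := by
    have := Real.add_one_le_exp (-(a/4)); linarith
  nlinarith

lemma measOf_lint (a : ℝ) (h0 : 0 ≤ a) (h1 : a ≤ 1) :
    ∫⁻ x, gexp x ∂(measOf a) ≤ ENNReal.ofReal (Real.exp (-(a / 4))) := by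
  rw [measOf]
  rw [lintegral_add_measure, lintegral_smul_measure, lintegral_smul_measure,
    lintegral_dirac' _ gexp_meas, lintegral_dirac' _ gexp_meas]
  have : (1:ENNReal)/2 * gexp 0 + (1:ENNReal)/2 * gexp (-a)
      = ENNReal.ofReal ((1 + Real.exp (-a)) / 2) := by
    simp only [gexp, Real.exp_zero]
    rw [ENNReal.ofReal_div_of_pos (by norm_num), ENNReal.ofReal_add (by norm_num)
      (Real.exp_nonneg _)]
    rw [ENNReal.ofReal_ofNat, ENNReal.ofReal_one]
    rw [ENNReal.add_div]
    simp [ENNReal.div_eq_inv_mul]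
  rw [smul_eq_mul, smul_eq_mul, this]
  exact ENNReal.ofReal_le_ofReal (key_real a h0 h1)

lemma foldr_prob : ∀ l : List ℝ,
    IsProbabilityMeasure ((l.map measOf).foldr convM (Measure.dirac (0:ℝ)))
  | [] => by simp; infer_instance
  | a :: l => by
    have := foldr_prob l
    simp only [List.map_cons, List.foldr_cons]
    infer_instance

lemma foldr_lint : ∀ l : List ℝ, (∀ a ∈ l, 0 ≤ a ∧ a ≤ 1) →
    ∫⁻ x, gexp x ∂((l.map measOf).foldr convM (Measure.dirac (0:ℝ)))
      ≤ ENNReal.ofReal (Real.exp (-(l.sum / 4)))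
  | [], _ => by
    simp only [List.map_nil, List.foldr_nil, List.sum_nil, neg_zero, zero_div,
      Real.exp_zero, ENNReal.ofReal_one]
    rw [lintegral_dirac' _ gexp_meas]
    simp [gexp]
  | a :: l, h => by
    have hprob := foldr_prob l
    have ih := foldr_lint l (fun b hb => h b (List.mem_cons_of_mem _ hb))
    have ha := h a List.mem_cons_self
    simp only [List.map_cons, List.foldr_cons, List.sum_cons]
    rw [convM_lint]
    calc (∫⁻ x, gexp x ∂measOf a) *
          ∫⁻ x, gexp x ∂((l.map measOf).foldr convM (Measure.dirac (0:ℝ)))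
        ≤ ENNReal.ofReal (Real.exp (-(a / 4))) * ENNReal.ofReal (Real.exp (-(l.sum / 4))) :=
          mul_le_mul' (measOf_lint a ha.1 ha.2) ih
      _ = ENNReal.ofReal (Real.exp (-((a + l.sum) / 4))) := by
          rw [← ENNReal.ofReal_mul (Real.exp_nonneg _), ← Real.exp_add]
          ring_nf

theorem stmt_6 (L ε : ℝ) (hL : 0 < L) (hε : 0 < ε) :
    ∃ A : ℝ, 0 < A ∧
      ∀ (N : ℕ) (a : Fin N → ℝ), (∀ k, 0 ≤ a k ∧ a k ≤ 1) → A ≤ ∑ k, a k →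
        ∀ ν : Measure ℝ,
          ν = (List.ofFn (fun k : Fin N =>
                ((1 : ENNReal) / 2) • Measure.dirac (0 : ℝ) +
                ((1 : ENNReal) / 2) • Measure.dirac (-(a k)))).foldr convM
              (Measure.dirac (0 : ℝ)) →
          (ν (Set.Icc (-L) 0)).toReal ≤ ε := by
  refine ⟨max 1 (4 * (L - Real.log ε)), lt_of_lt_of_le one_pos (le_max_left _ _), ?_⟩
  intro N a ha hsum ν hν
  have hofn : (List.ofFn (fun k : Fin N =>
        ((1 : ENNReal) / 2) • Measure.dirac (0 : ℝ) +
        ((1 : ENNReal) / 2) • Measure.dirac (-(a k))))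
      = (List.ofFn a).map measOf := by
    rw [List.map_ofFn]; rfl
  rw [hofn] at hν
  have hmem : ∀ b ∈ List.ofFn a, 0 ≤ b ∧ b ≤ 1 := by
    intro b hb
    obtain ⟨k, rfl⟩ := List.mem_ofFn.1 hb
    exact ha k
  have hsum' : (List.ofFn a).sum = ∑ k, a k := (List.sum_ofFn (f := a))
  have hlint : ∫⁻ x, gexp x ∂ν ≤ ENNReal.ofReal (Real.exp (-((∑ k, a k) / 4))) := by
    rw [hν, ← hsum']
    exact foldr_lint _ hmem
  -- Markov step: ν (Icc (-L) 0) ≤ e^L * ∫ gexp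
  have hset : ν (Set.Icc (-L) 0) ≤ ENNReal.ofReal (Real.exp L) * ∫⁻ x, gexp x ∂ν := by
    have h1 : ν (Set.Icc (-L) 0) = ∫⁻ _ in Set.Icc (-L) 0, 1 ∂ν := by
      rw [setLIntegral_one]
    rw [h1]
    have h2 : ∫⁻ x in Set.Icc (-L) 0, (1:ENNReal) ∂ν
        ≤ ∫⁻ x in Set.Icc (-L) 0, ENNReal.ofReal (Real.exp L) * gexp x ∂ν := by
      apply setLIntegral_mono ((measurable_const.mul gexp_meas))
      intro x hx
      have : (1:ENNReal) = ENNReal.ofReal (Real.exp 0) := by simp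
      rw [this]
      have : ENNReal.ofReal (Real.exp L) * gexp x = ENNReal.ofReal (Real.exp (L + x)) := by
        rw [gexp, ← ENNReal.ofReal_mul (Real.exp_nonneg _), Real.exp_add]
      show _ ≤ ENNReal.ofReal (Real.exp L) * gexp x
      rw [this]
      exact ENNReal.ofReal_le_ofReal (Real.exp_le_exp.2 (by linarith [hx.1]))
    refine h2.trans ?_
    rw [lintegral_const_mul _ gexp_meas]
    exact mul_le_mul_right (setLIntegral_le_lintegral _ _) _
  have hfinal : ν (Set.Icc (-L) 0) ≤ ENNReal.ofReal ε := by
    refine hset.trans ?_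
    calc ENNReal.ofReal (Real.exp L) * ∫⁻ x, gexp x ∂ν
        ≤ ENNReal.ofReal (Real.exp L) * ENNReal.ofReal (Real.exp (-((∑ k, a k) / 4))) :=
          mul_le_mul_right hlint _
      _ = ENNReal.ofReal (Real.exp (L - (∑ k, a k) / 4)) := by
          rw [← ENNReal.ofReal_mul (Real.exp_nonneg _), ← Real.exp_add]; ring_nf
      _ ≤ ENNReal.ofReal ε := by
          apply ENNReal.ofReal_le_ofReal
          have h4 : 4 * (L - Real.log ε) ≤ ∑ k, a k :=
            le_trans (le_max_right _ _) hsum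
          have : L - (∑ k, a k) / 4 ≤ Real.log ε := by linarith
          calc Real.exp (L - (∑ k, a k) / 4) ≤ Real.exp (Real.log ε) := Real.exp_le_exp.2 this
            _ = ε := Real.exp_log hε
  exact ENNReal.toReal_le_of_le_ofReal hε.le hfinal
end

section
/- Let d ≥ 2, ρ, ρ' ∈ ℝ be fixed, and let π_j > 0 be a sequence of measurable functions on (0,∞) (with all integrals below finite and positive). Suppose that for every t₀ > 0, ∫₀^{t₀} e^{-((d-2)²/4)t} π_j(t) t^{-1/2} dt = o(∫_{t₀}^∞ e^{-((d-2)²/4)t} π_j(t) t^{-1/2} dt) as j → ∞. Then the ratio [∫₀^∞ t^{-1/2} e^{-(ρ+(d-2)t)²/(4t)} π_j(t) dt] / [∫₀^∞ t^{-1/2} e^{-(ρ'+(d-2)t)²/(4t)} π_j(t) dt] converges to e^{-((d-2)/2)(ρ - ρ')} as j → ∞. -/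
open MeasureTheory Real Filter

private lemma key_exp (c σ t : ℝ) (ht : 0 < t) :
    Real.exp (-(σ + c * t) ^ 2 / (4 * t)) =
      Real.exp (-(c / 2 * σ)) * (Real.exp (-σ ^ 2 / (4 * t)) * Real.exp (-(c ^ 2 / 4) * t)) := by
  rw [← Real.exp_add, ← Real.exp_add]
  congr 1
  field_simp
  ring

theorem stmt_10 (d : ℕ) (hd : 2 ≤ d) (ρ ρ' : ℝ) (pik : ℕ → ℝ → ℝ)
    (hmeas : ∀ j, Measurable (pik j)) (hpos : ∀ j t, 0 < t → 0 < pik j t)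
    (hfin : ∀ j (σ : ℝ),
      0 < ∫ t in Set.Ioi (0 : ℝ),
            Real.exp (-(σ + ((d : ℝ) - 2) * t) ^ 2 / (4 * t)) * pik j t / Real.sqrt t ∧
      IntegrableOn
        (fun t => Real.exp (-(σ + ((d : ℝ) - 2) * t) ^ 2 / (4 * t)) * pik j t / Real.sqrt t)
        (Set.Ioi (0 : ℝ)))
    (hlittleo : ∀ t₀ : ℝ, 0 < t₀ →
      Tendsto (fun j =>
          (∫ t in Set.Ioc (0 : ℝ) t₀,
              Real.exp (-(((d : ℝ) - 2) ^ 2 / 4) * t) * pik j t / Real.sqrt t) /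
          (∫ t in Set.Ioi t₀,
              Real.exp (-(((d : ℝ) - 2) ^ 2 / 4) * t) * pik j t / Real.sqrt t))
        atTop (nhds 0)) :
    Tendsto (fun j =>
        (∫ t in Set.Ioi (0 : ℝ),
            Real.exp (-(ρ + ((d : ℝ) - 2) * t) ^ 2 / (4 * t)) * pik j t / Real.sqrt t) /
        (∫ t in Set.Ioi (0 : ℝ),
            Real.exp (-(ρ' + ((d : ℝ) - 2) * t) ^ 2 / (4 * t)) * pik j t / Real.sqrt t))
      atTop (nhds (Real.exp (-(((d : ℝ) - 2) / 2) * (ρ - ρ')))) := by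
  set c : ℝ := (d : ℝ) - 2 with hcdef
  set w : ℕ → ℝ → ℝ := fun j t => Real.exp (-(c ^ 2 / 4) * t) * pik j t / Real.sqrt t with hwdef
  -- positivity of w
  have hwpos : ∀ j t, 0 < t → 0 < w j t := fun j t ht =>
    div_pos (mul_pos (Real.exp_pos _) (hpos j t ht)) (Real.sqrt_pos.mpr ht)
  -- the σ = 0 integrand agrees with w on Ioi 0
  have h0eq : ∀ j, Set.EqOn
      (fun t => Real.exp (-((0:ℝ) + c * t) ^ 2 / (4 * t)) * pik j t / Real.sqrt t)
      (w j) (Set.Ioi (0:ℝ)) := by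
    intro j t ht
    have ht' : (t:ℝ) ≠ 0 := ne_of_gt ht
    simp only [hwdef]
    congr 2
    congr 1
    rw [div_eq_iff (mul_ne_zero four_ne_zero ht')]
    ring
  have hwint : ∀ j, IntegrableOn (w j) (Set.Ioi (0:ℝ)) := fun j =>
    ((hfin j 0).2.congr_fun (h0eq j) measurableSet_Ioi)
  -- A j = full integral of w
  set A : ℕ → ℝ := fun j => ∫ t in Set.Ioi (0:ℝ), w j t with hAdef
  have hApos : ∀ j, 0 < A j := by
    intro j
    have := (hfin j 0).1
    rwa [setIntegral_congr_fun measurableSet_Ioi (h0eq j)] at this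
  -- g σ j t
  set g : ℝ → ℕ → ℝ → ℝ := fun σ j t => Real.exp (-σ ^ 2 / (4 * t)) * w j t with hgdef
  have hgmeas : ∀ σ j, Measurable (g σ j) := by
    intro σ j
    have := hmeas j
    fun_prop
  have hgint : ∀ σ j, IntegrableOn (g σ j) (Set.Ioi (0:ℝ)) := by
    intro σ j
    refine MeasureTheory.Integrable.mono (hwint j) ((hgmeas σ j).aestronglyMeasurable) ?_
    rw [ae_restrict_iff' measurableSet_Ioi]
    refine Eventually.of_forall fun t ht => ?_
    have ht' : (0:ℝ) < t := ht
    have hwt := (hwpos j t ht).le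
    have h1 : Real.exp (-σ ^ 2 / (4 * t)) ≤ 1 := by
      rw [Real.exp_le_one_iff, neg_div]
      exact neg_nonpos.mpr (by positivity)
    rw [Real.norm_eq_abs, Real.norm_eq_abs, abs_of_nonneg hwt,
      abs_of_nonneg (mul_nonneg (Real.exp_pos _).le hwt)]
    nlinarith [Real.exp_pos (-σ ^ 2 / (4 * t))]
  -- F = exp(-(c/2σ)) * G
  have hF_eq : ∀ σ j,
      (∫ t in Set.Ioi (0:ℝ), Real.exp (-(σ + c * t) ^ 2 / (4 * t)) * pik j t / Real.sqrt t)
        = Real.exp (-(c / 2 * σ)) * ∫ t in Set.Ioi (0:ℝ), g σ j t := by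
    intro σ j
    rw [← integral_const_mul]
    refine setIntegral_congr_fun measurableSet_Ioi fun t ht => ?_
    simp only [hgdef, hwdef]
    rw [key_exp c σ t ht]
    ring
  -- G positive
  have hGpos : ∀ σ j, 0 < ∫ t in Set.Ioi (0:ℝ), g σ j t := by
    intro σ j
    have h := (hfin j σ).1
    rw [hF_eq σ j] at h
    by_contra hG
    push_neg at hG
    nlinarith [Real.exp_pos (-(c / 2 * σ))]
  -- G ≤ A
  have hGle : ∀ σ j, (∫ t in Set.Ioi (0:ℝ), g σ j t) ≤ A j := by
    intro σ j
    refine setIntegral_mono_on (hgint σ j) (hwint j) measurableSet_Ioi fun t ht => ?_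
    have ht' : (0:ℝ) < t := ht
    have hwt := (hwpos j t ht).le
    have h1 : Real.exp (-σ ^ 2 / (4 * t)) ≤ 1 := by
      rw [Real.exp_le_one_iff, neg_div]
      exact neg_nonpos.mpr (by positivity)
    simpa [hgdef] using mul_le_of_le_one_left hwt h1
  -- split A = B + C
  have hsplit : ∀ j (t₀ : ℝ), 0 < t₀ →
      A j = (∫ t in Set.Ioc (0:ℝ) t₀, w j t) + ∫ t in Set.Ioi t₀, w j t := by
    intro j t₀ ht₀
    have h := setIntegral_union (μ := volume) (f := w j) (Set.Ioc_disjoint_Ioi le_rfl)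
      measurableSet_Ioi ((hwint j).mono_set Set.Ioc_subset_Ioi_self)
      ((hwint j).mono_set (Set.Ioi_subset_Ioi ht₀.le))
    rw [Set.Ioc_union_Ioi_eq_Ioi ht₀.le] at h
    exact h
  have hBnn : ∀ j (t₀ : ℝ), 0 ≤ ∫ t in Set.Ioc (0:ℝ) t₀, w j t := fun j t₀ =>
    setIntegral_nonneg measurableSet_Ioc fun t ht => (hwpos j t ht.1).le
  have hCpos : ∀ j (t₀ : ℝ), 0 < t₀ → 0 < ∫ t in Set.Ioi t₀, w j t := by
    intro j t₀ ht₀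
    refine (setIntegral_pos_iff_support_of_nonneg_ae ?_ ((hwint j).mono_set
      (Set.Ioi_subset_Ioi ht₀.le))).mpr ?_
    · exact (ae_restrict_iff' measurableSet_Ioi).mpr
        (Filter.Eventually.of_forall fun t ht => (hwpos j t (ht₀.trans ht)).le)
    · have hsub : Set.Ioi t₀ ⊆ Function.support (w j) ∩ Set.Ioi t₀ := fun t ht =>
        ⟨ne_of_gt (hwpos j t (ht₀.trans ht)), ht⟩
      calc (0:ENNReal) < ⊤ := by simp
        _ = volume (Set.Ioi t₀) := (Real.volume_Ioi).symm
        _ ≤ _ := measure_mono hsub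
  -- B/A → 0
  have hBA : ∀ t₀ : ℝ, 0 < t₀ →
      Tendsto (fun j => (∫ t in Set.Ioc (0:ℝ) t₀, w j t) / A j) atTop (nhds 0) := by
    intro t₀ ht₀
    refine squeeze_zero (fun j => div_nonneg (hBnn j t₀) (hApos j).le) (fun j => ?_)
      (hlittleo t₀ ht₀)
    have hCA : (∫ t in Set.Ioi t₀, w j t) ≤ A j := by
      have := hsplit j t₀ ht₀
      have := hBnn j t₀
      linarith
    exact div_le_div_of_nonneg_left (hBnn j t₀) (hCpos j t₀ ht₀) hCA
  -- lower bound for G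
  have hGlow : ∀ σ j (t₀ : ℝ), 0 < t₀ →
      Real.exp (-σ ^ 2 / (4 * t₀)) * (∫ t in Set.Ioi t₀, w j t)
        ≤ ∫ t in Set.Ioi (0:ℝ), g σ j t := by
    intro σ j t₀ ht₀
    have step1 : Real.exp (-σ ^ 2 / (4 * t₀)) * (∫ t in Set.Ioi t₀, w j t)
        = ∫ t in Set.Ioi t₀, Real.exp (-σ ^ 2 / (4 * t₀)) * w j t := (integral_const_mul _ _).symm
    rw [step1]
    have step2 : (∫ t in Set.Ioi t₀, Real.exp (-σ ^ 2 / (4 * t₀)) * w j t)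
        ≤ ∫ t in Set.Ioi t₀, g σ j t := by
      refine setIntegral_mono_on (((hwint j).mono_set (Set.Ioi_subset_Ioi ht₀.le)).const_mul _)
        ((hgint σ j).mono_set (Set.Ioi_subset_Ioi ht₀.le)) measurableSet_Ioi fun t ht => ?_
      have hwt := (hwpos j t (ht₀.trans ht)).le
      have hexp : Real.exp (-σ ^ 2 / (4 * t₀)) ≤ Real.exp (-σ ^ 2 / (4 * t)) := by
        rw [Real.exp_le_exp]
        rw [neg_div, neg_div, neg_le_neg_iff]
        have ht' : (0:ℝ) < 4 * t₀ := by linarith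
        exact div_le_div_of_nonneg_left (sq_nonneg σ) ht' (by linarith [le_of_lt (Set.mem_Ioi.mp ht)])
      exact mul_le_mul_of_nonneg_right hexp hwt
    refine step2.trans ?_
    refine setIntegral_mono_set (hgint σ j) ?_ (HasSubset.Subset.eventuallyLE
      (Set.Ioi_subset_Ioi ht₀.le))
    exact (ae_restrict_iff' measurableSet_Ioi).mpr (Filter.Eventually.of_forall
      fun t ht => mul_nonneg (Real.exp_pos _).le (hwpos j t ht).le)
  -- main lemma : G/A → 1
  have key : ∀ σ : ℝ, Tendsto (fun j => (∫ t in Set.Ioi (0:ℝ), g σ j t) / A j) atTop (nhds 1) := by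
    intro σ
    rw [Metric.tendsto_atTop]
    intro ε hε
    set t₀ : ℝ := (σ ^ 2 + 1) / (2 * ε) with ht₀def
    have ht₀ : 0 < t₀ := by positivity
    set x : ℝ := σ ^ 2 / (4 * t₀) with hxdef
    have hx0 : 0 ≤ x := by positivity
    have hεne : ε ≠ 0 := ne_of_gt hε
    have hxε : x < ε / 2 := by
      have hxeq : x = σ ^ 2 * ε / (2 * (σ ^ 2 + 1)) := by
        rw [hxdef, ht₀def]
        field_simp
        ring
      rw [hxeq, div_lt_div_iff₀ (by positivity) (by norm_num)]
      nlinarith [sq_nonneg σ]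
    obtain ⟨N, hN⟩ := Metric.tendsto_atTop.mp (hBA t₀ ht₀) (ε / 2) (by positivity)
    refine ⟨N, fun j hj => ?_⟩
    have hBj := hN j hj
    rw [Real.dist_eq, sub_zero] at hBj
    have hB0 := hBnn j t₀
    have hA := hApos j
    have habs : (∫ t in Set.Ioc (0:ℝ) t₀, w j t) / A j < ε / 2 := by
      rw [abs_of_nonneg (div_nonneg hB0 hA.le)] at hBj
      exact hBj
    -- C/A = 1 - B/A
    have hCA : (∫ t in Set.Ioi t₀, w j t) / A j
        = 1 - (∫ t in Set.Ioc (0:ℝ) t₀, w j t) / A j := by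
      have hsp := hsplit j t₀ ht₀
      field_simp
      linarith
    have hGA1 : (∫ t in Set.Ioi (0:ℝ), g σ j t) / A j ≤ 1 := by
      rw [div_le_one hA]
      exact hGle σ j
    have hGA2 : Real.exp (-x) * ((∫ t in Set.Ioi t₀, w j t) / A j)
        ≤ (∫ t in Set.Ioi (0:ℝ), g σ j t) / A j := by
      rw [← mul_div_assoc]
      refine (div_le_div_iff_of_pos_right hA).mpr ?_
      have h := hGlow σ j t₀ ht₀
      rw [neg_div, ← hxdef] at h
      exact h
    rw [hCA] at hGA2
    have h3 : 1 - x ≤ Real.exp (-x) := by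
      have := Real.add_one_le_exp (-x)
      linarith
    have h4 : Real.exp (-x) ≤ 1 := by
      rw [Real.exp_le_one_iff]; linarith
    rw [Real.dist_eq, abs_of_nonpos (by linarith)]
    set u := (∫ t in Set.Ioi (0:ℝ), g σ j t) / A j
    set b := (∫ t in Set.Ioc (0:ℝ) t₀, w j t) / A j
    have hb0 : 0 ≤ b := div_nonneg hB0 hA.le
    nlinarith [mul_nonneg hb0 (Real.exp_pos (-x)).le]
  -- assemble
  have hrw : ∀ j,
      (∫ t in Set.Ioi (0:ℝ), Real.exp (-(ρ + c * t) ^ 2 / (4 * t)) * pik j t / Real.sqrt t) /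
      (∫ t in Set.Ioi (0:ℝ), Real.exp (-(ρ' + c * t) ^ 2 / (4 * t)) * pik j t / Real.sqrt t)
        = Real.exp (-(c / 2) * (ρ - ρ')) *
          (((∫ t in Set.Ioi (0:ℝ), g ρ j t) / A j) / ((∫ t in Set.Ioi (0:ℝ), g ρ' j t) / A j)) := by
    intro j
    have he : Real.exp (-(c / 2 * ρ)) = Real.exp (-(c / 2) * (ρ - ρ')) *
        Real.exp (-(c / 2 * ρ')) := by
      rw [← Real.exp_add]; congr 1; ring
    rw [hF_eq ρ j, hF_eq ρ' j, he]
    have hA := (hApos j).ne'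
    have hG' := (hGpos ρ' j).ne'
    have he2 : Real.exp (-(c / 2 * ρ')) ≠ 0 := Real.exp_ne_zero _
    field_simp
  have hfinal : Tendsto (fun j => Real.exp (-(c / 2) * (ρ - ρ')) *
      (((∫ t in Set.Ioi (0:ℝ), g ρ j t) / A j) / ((∫ t in Set.Ioi (0:ℝ), g ρ' j t) / A j)))
      atTop (nhds (Real.exp (-(c / 2) * (ρ - ρ')))) := by
    have := ((key ρ).div (key ρ') one_ne_zero)
    have h2 := this.const_mul (Real.exp (-(c / 2) * (ρ - ρ')))
    simpa using h2
  refine Tendsto.congr (fun j => (hrw j).symm) ?_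
  convert hfinal using 2
end
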